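/- Let ω be a radial weight and ν : 𝔻 → [0,∞) a radial function such that z ↦ ω(z)ν(z) is a radial weight. Let f : 𝔻 → ℂ be measurable and suppose the function z ↦ f(z) · ∫_𝔻 |B^{ων}_z(ζ)| ω(ζ)ν(ζ) dA(ζ) belongs to L¹_ω. Then P_ω(V_{ω,ν}(f))(ζ) = P_ω(f)(ζ) for every ζ ∈ 𝔻. -/

import Mathlib

open MeasureTheory Real Set

noncomputable section

/-- The open unit disc in ℂ. -/
def unitDisc : Set ℂ := {z : ℂ | ‖z‖ < 1}

/-- Normalized area measure dA = dx dy / π on ℂ. -/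
def dA : Measure ℂ := (ENNReal.ofReal (1 / Real.pi)) • (volume : Measure ℂ)

/-- Tail of a radial weight: ω̂(r) = ∫_r^1 ω(s) ds. -/
def wTail (ω : ℂ → ℝ) (r : ℝ) : ℝ := ∫ s in r..1, ω ((s : ℂ))

/-- Moments: ω_x = ∫_0^1 r^x ω(r) dr (real exponent). -/
def wMoment (ω : ℂ → ℝ) (x : ℝ) : ℝ := ∫ r in (0:ℝ)..1, r ^ x * ω ((r : ℂ))

/-- A radial weight: nonnegative, radial, integrable on 𝔻, with strictly positive tails. -/
structure IsRadialWeight (ω : ℂ → ℝ) : Prop where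
  nonneg : ∀ z, 0 ≤ ω z
  radial : ∀ z : ℂ, ω z = ω (((‖z‖ : ℝ) : ℂ))
  integrable : IntegrableOn ω unitDisc dA
  tailPos : ∀ r : ℝ, 0 ≤ r → r < 1 → 0 < wTail ω r

/-- The class D̂ of upper doubling radial weights. -/
def Dhat (ω : ℂ → ℝ) : Prop :=
  ∃ C : ℝ, 0 < C ∧ ∀ r : ℝ, 0 ≤ r → r < 1 → wTail ω r ≤ C * wTail ω ((1 + r) / 2)

/-- The class Ď. -/
def Dcheck (ω : ℂ → ℝ) : Prop :=
  ∃ C K : ℝ, 1 < C ∧ 1 < K ∧ ∀ r : ℝ, 0 ≤ r → r < 1 →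
    C * wTail ω (1 - (1 - r) / K) ≤ wTail ω r

/-- The class D = D̂ ∩ Ď. -/
def Dclass (ω : ℂ → ℝ) : Prop := Dhat ω ∧ Dcheck ω

/-- The Bergman reproducing kernel of A²_ω. -/
def bergmanKernel (ω : ℂ → ℝ) (z ζ : ℂ) : ℂ :=
  ∑' n : ℕ, (starRingEnd ℂ z * ζ) ^ n / (2 * ((wMoment ω (2 * (n : ℝ) + 1) : ℝ) : ℂ))

/-- The Bergman projection P_ω. -/
def bergmanProj (ω : ℂ → ℝ) (g : ℂ → ℂ) (z : ℂ) : ℂ :=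
  ∫ ζ in unitDisc, g ζ * starRingEnd ℂ (bergmanKernel ω z ζ) * ((ω ζ : ℝ) : ℂ) ∂dA

/-- The small Hankel operator h^ω_φ. -/
def hankel (ω : ℂ → ℝ) (φ g : ℂ → ℂ) (z : ℂ) : ℂ :=
  ∫ ζ in unitDisc, φ ζ * g ζ * bergmanKernel ω z ζ * ((ω ζ : ℝ) : ℂ) ∂dA

/-- The transform V_{ω,ν}. -/
def Vop (ω ν : ℂ → ℝ) (f : ℂ → ℂ) (z : ℂ) : ℂ :=
  ((ν z : ℝ) : ℂ) *
    ∫ ζ in unitDisc, f ζ * starRingEnd ℂ (bergmanKernel (fun w => ω w * ν w) z ζ) *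
      ((ω ζ : ℝ) : ℂ) ∂dA

/-- ‖g‖_{L^p_ω} = (∫_𝔻 |g|^p ω dA)^{1/p}. -/
def LpNorm (ω : ℂ → ℝ) (p : ℝ) (g : ℂ → ℂ) : ℝ :=
  (∫ z in unitDisc, ‖g z‖ ^ p * ω z ∂dA) ^ (1 / p)

/-- f ∈ L¹_{ω_log}. -/
def MemL1log (ω : ℂ → ℝ) (f : ℂ → ℂ) : Prop :=
  AEStronglyMeasurable f (dA.restrict unitDisc) ∧
  IntegrableOn (fun z => ‖f z‖ * Real.log (Real.exp 1 / (1 - ‖z‖)) * ω z)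
    unitDisc dA

/-- A bounded analytic function on the unit disc. -/
def BoundedAnalytic (g : ℂ → ℂ) : Prop :=
  DifferentiableOn ℂ g unitDisc ∧ ∃ M : ℝ, ∀ z ∈ unitDisc, ‖g z‖ ≤ M

/-- The set of Bloch seminorm values (1-|z|²)|f'(z)|, z ∈ 𝔻. -/
def blochSet (f : ℂ → ℂ) : Set ℝ :=
  (fun z => (1 - ‖z‖ ^ 2) * ‖deriv f z‖) '' unitDisc

/-- The Bloch norm ‖f‖_ℬ = |f(0)| + sup_{z∈𝔻}(1-|z|²)|f'(z)|. -/
def blochNorm (f : ℂ → ℂ) : ℝ := ‖f 0‖ + sSup (blochSet f)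

/-- Membership in the Bloch space ℬ. -/
def MemBloch (f : ℂ → ℂ) : Prop :=
  DifferentiableOn ℂ f unitDisc ∧ BddAbove (blochSet f)

/-- Admissible bounds M > 0 for h^ω_{conj f} : A^p_ω → conj(A^p_ω). -/
def hankelBoundSet (ω : ℂ → ℝ) (p : ℝ) (f : ℂ → ℂ) : Set ℝ :=
  {M : ℝ | 0 < M ∧ ∀ g : ℂ → ℂ, BoundedAnalytic g →
    LpNorm ω p (hankel ω (fun ζ => starRingEnd ℂ (f ζ)) g) ≤ M * LpNorm ω p g}

/-- Operator norm of the small Hankel operator: least admissible bound. -/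
def hankelNorm (ω : ℂ → ℝ) (p : ℝ) (f : ℂ → ℂ) : ℝ := sInf (hankelBoundSet ω p f)

/-- The set of values |V_{ω,ν}(f)(z)|, z ∈ 𝔻. -/
def VSet (ω ν : ℂ → ℝ) (f : ℂ → ℂ) : Set ℝ :=
  (fun z => ‖Vop ω ν f z‖) '' unitDisc

/-- sup_{z∈𝔻} |V_{ω,ν}(f)(z)|. -/
def VSup (ω ν : ℂ → ℝ) (f : ℂ → ℂ) : ℝ := sSup (VSet ω ν f)

/-- A nonnegative radial function on 𝔻. -/
def IsRadialNonneg (ν : ℂ → ℝ) : Prop :=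
  (∀ z, 0 ≤ ν z) ∧ ∀ z : ℂ, ν z = ν (((‖z‖ : ℝ) : ℂ))

/-- The tail of ν viewed as a radial function on ℂ: z ↦ ν̂(|z|). -/
def tailFun (ν : ℂ → ℝ) : ℂ → ℝ := fun z => wTail ν (‖z‖)

namespace Stmt10Aux

open MeasureTheory Real Set Filter Complex

lemma unitDisc_meas : MeasurableSet unitDisc :=
  (isOpen_lt continuous_norm continuous_const).measurableSet

lemma dA_restrict (s : Set ℂ) :
    dA.restrict s = (ENNReal.ofReal (1 / Real.pi)) • ((volume : Measure ℂ).restrict s) := by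
  rw [dA, Measure.restrict_smul]

section RW

variable {μ : ℂ → ℝ}

lemma RW.intervalIntegrable (hμ : IsRadialWeight μ) : IntervalIntegrable (fun s : ℝ => μ ((s : ℂ))) volume 0 1 := by
  by_contra h
  have h0 : wTail μ 0 = 0 := intervalIntegral.integral_undef h
  have := hμ.tailPos 0 le_rfl one_pos
  linarith

lemma RW.integrableOn_Ioc (hμ : IsRadialWeight μ) : IntegrableOn (fun s : ℝ => μ ((s : ℂ))) (Ioc (0:ℝ) 1) volume :=
  (intervalIntegrable_iff_integrableOn_Ioc_of_le (by norm_num)).mp (RW.intervalIntegrable hμ)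

lemma RW.pow_mul_integrableOn (hμ : IsRadialWeight μ) {x : ℝ} (hx : 0 ≤ x) :
    IntegrableOn (fun r : ℝ => r ^ x * μ ((r : ℂ))) (Ioc (0:ℝ) 1) volume := by
  refine Integrable.mono' (RW.integrableOn_Ioc hμ) ?_ ?_
  · exact ((by fun_prop : Measurable fun r : ℝ => r ^ x).aestronglyMeasurable).mul
      (RW.integrableOn_Ioc hμ).aestronglyMeasurable
  · rw [ae_restrict_iff' measurableSet_Ioc]
    refine Eventually.of_forall fun r hr => ?_
    have h1 : (0:ℝ) ≤ r ^ x := Real.rpow_nonneg hr.1.le x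
    have h2 : r ^ x ≤ 1 := Real.rpow_le_one hr.1.le hr.2 hx
    have h3 : 0 ≤ μ ((r:ℂ)) := hμ.nonneg _
    rw [Real.norm_eq_abs, _root_.abs_of_nonneg (mul_nonneg h1 h3)]
    nlinarith

lemma RW.moment_eq (hμ : IsRadialWeight μ) (x : ℝ) :
    wMoment μ x = ∫ r in Ioc (0:ℝ) 1, r ^ x * μ ((r : ℂ)) := by
  rw [wMoment, intervalIntegral.integral_of_le (by norm_num : (0:ℝ) ≤ 1)]

lemma RW.tail_eq (hμ : IsRadialWeight μ) {r : ℝ} (hr : r ≤ 1) :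
    wTail μ r = ∫ s in Ioc r 1, μ ((s : ℂ)) := by
  rw [wTail, intervalIntegral.integral_of_le hr]

lemma RW.moment_nonneg (hμ : IsRadialWeight μ) (x : ℝ) : 0 ≤ wMoment μ x := by
  rw [RW.moment_eq hμ]
  refine setIntegral_nonneg measurableSet_Ioc fun r hr => ?_
  exact mul_nonneg (Real.rpow_nonneg hr.1.le x) (hμ.nonneg _)

lemma RW.moment_ge (hμ : IsRadialWeight μ) {x : ℝ} (hx : 0 ≤ x) {ρ : ℝ} (h0 : 0 < ρ) (h1 : ρ < 1) :
    ρ ^ x * wTail μ ρ ≤ wMoment μ x := by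
  have hsub : Ioc ρ 1 ⊆ Ioc (0:ℝ) 1 := Ioc_subset_Ioc_left h0.le
  have hint2 : IntegrableOn (fun r : ℝ => r ^ x * μ ((r:ℂ))) (Ioc ρ 1) volume :=
    (RW.pow_mul_integrableOn hμ hx).mono_set hsub
  have hint3 : IntegrableOn (fun r : ℝ => ρ ^ x * μ ((r:ℂ))) (Ioc ρ 1) volume :=
    (((RW.integrableOn_Ioc hμ).mono_set hsub).const_mul _)
  have step1 : ∫ r in Ioc ρ 1, ρ ^ x * μ ((r:ℂ)) ≤ ∫ r in Ioc ρ 1, r ^ x * μ ((r:ℂ)) := by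
    refine setIntegral_mono_on hint3 hint2 measurableSet_Ioc fun r hr => ?_
    exact mul_le_mul_of_nonneg_right (Real.rpow_le_rpow h0.le hr.1.le hx) (hμ.nonneg _)
  have step2 : ∫ r in Ioc ρ 1, r ^ x * μ ((r:ℂ)) ≤ ∫ r in Ioc (0:ℝ) 1, r ^ x * μ ((r:ℂ)) := by
    refine setIntegral_mono_set (RW.pow_mul_integrableOn hμ hx) ?_ (HasSubset.Subset.eventuallyLE hsub)
    refine (ae_restrict_iff' measurableSet_Ioc).2 (Eventually.of_forall fun r hr => ?_)
    exact mul_nonneg (Real.rpow_nonneg hr.1.le x) (hμ.nonneg _)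
  calc ρ ^ x * wTail μ ρ = ∫ r in Ioc ρ 1, ρ ^ x * μ ((r:ℂ)) := by
        rw [RW.tail_eq hμ h1.le, integral_const_mul]
    _ ≤ wMoment μ x := by rw [RW.moment_eq hμ]; exact le_trans step1 step2

lemma RW.moment_pos (hμ : IsRadialWeight μ) {x : ℝ} (hx : 0 ≤ x) : 0 < wMoment μ x := by
  have h := RW.moment_ge hμ hx (by norm_num : (0:ℝ) < 1/2) (by norm_num)
  have ht := hμ.tailPos (1/2) (by norm_num) (by norm_num)
  have : (0:ℝ) < (1/2:ℝ) ^ x := Real.rpow_pos_of_pos (by norm_num) x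
  nlinarith

end RW

end Stmt10Aux
namespace Stmt10Aux

open MeasureTheory Real Set Filter Complex

section Kernel

variable {μ : ℂ → ℝ}

/-- The n-th term of the Bergman kernel series. -/
def kterm (μ : ℂ → ℝ) (z u : ℂ) (n : ℕ) : ℂ :=
  (starRingEnd ℂ z * u) ^ n / (2 * ((wMoment μ (2 * (n : ℝ) + 1) : ℝ) : ℂ))

lemma kernel_eq_tsum (z u : ℂ) : bergmanKernel μ z u = ∑' n : ℕ, kterm μ z u n := rfl

lemma kterm_norm (hμ : IsRadialWeight μ) (z u : ℂ) (n : ℕ) :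
    ‖kterm μ z u n‖ = (‖z‖ * ‖u‖) ^ n / (2 * wMoment μ (2 * (n:ℝ) + 1)) := by
  have hm := RW.moment_pos hμ (by positivity : (0:ℝ) ≤ 2 * (n:ℝ) + 1)
  rw [kterm, norm_div, norm_pow, norm_mul]
  simp only [Complex.norm_conj, map_mul, norm_mul, Complex.norm_real, Real.norm_eq_abs,
    Complex.norm_two, _root_.abs_of_pos hm]

lemma rho_pow_odd {ρ : ℝ} (h0 : 0 < ρ) (n : ℕ) : ρ ^ (2 * (n:ℝ) + 1) = ρ * (ρ ^ 2) ^ n := by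
  rw [show (2 * (n:ℝ) + 1) = ((2 * n + 1 : ℕ) : ℝ) by push_cast; ring, Real.rpow_natCast]
  ring

lemma kterm_norm_le (hμ : IsRadialWeight μ) {z u : ℂ} {ρ : ℝ} (h0 : 0 < ρ) (h1 : ρ < 1)
    (hu : ‖u‖ ≤ 1) (n : ℕ) :
    ‖kterm μ z u n‖ ≤ (1 / (2 * ρ * wTail μ ρ)) * (‖z‖ / ρ ^ 2) ^ n := by
  have htail := hμ.tailPos ρ h0.le h1
  have hx : (0:ℝ) ≤ 2 * (n:ℝ) + 1 := by positivity
  have hm := RW.moment_pos hμ hx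
  have hge := RW.moment_ge hμ hx h0 h1
  rw [rho_pow_odd h0 n] at hge
  rw [kterm_norm hμ]
  have num_le : (‖z‖ * ‖u‖) ^ n ≤ ‖z‖ ^ n := by
    rw [mul_pow]
    have h1' : ‖u‖ ^ n ≤ 1 := pow_le_one₀ (norm_nonneg u) hu
    have h2' : (0:ℝ) ≤ ‖z‖ ^ n := pow_nonneg (norm_nonneg z) n
    nlinarith
  have hden : (0:ℝ) < 2 * (ρ * (ρ^2)^n * wTail μ ρ) := by positivity
  have key : (‖z‖ * ‖u‖) ^ n / (2 * wMoment μ (2 * (n:ℝ) + 1))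
      ≤ ‖z‖ ^ n / (2 * (ρ * (ρ^2)^n * wTail μ ρ)) := by
    apply div_le_div₀ (pow_nonneg (norm_nonneg z) n) num_le hden (by linarith)
  refine key.trans (le_of_eq ?_)
  rw [div_pow, div_mul_div_comm, one_mul]
  congr 1
  ring

lemma half_lt_params {z : ℂ} (hz : ‖z‖ < 1) :
    0 < Real.sqrt ((1 + ‖z‖) / 2) ∧ Real.sqrt ((1 + ‖z‖) / 2) < 1 ∧
      ‖z‖ < Real.sqrt ((1 + ‖z‖) / 2) ^ 2 := by
  have h0 : (0:ℝ) < (1 + ‖z‖) / 2 := by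
    have := norm_nonneg z; linarith
  have hsq : Real.sqrt ((1 + ‖z‖) / 2) ^ 2 = (1 + ‖z‖) / 2 :=
    Real.sq_sqrt h0.le
  have hpos : 0 < Real.sqrt ((1 + ‖z‖) / 2) := Real.sqrt_pos.2 h0
  refine ⟨hpos, ?_, by rw [hsq]; linarith⟩
  nlinarith [hsq, hpos]

lemma kterm_summable_norm (hμ : IsRadialWeight μ) {z u : ℂ} (hz : ‖z‖ < 1)
    (hu : ‖u‖ ≤ 1) : Summable fun n : ℕ => ‖kterm μ z u n‖ := by
  obtain ⟨h0, h1, h2⟩ := half_lt_params hz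
  set ρ := Real.sqrt ((1 + ‖z‖) / 2)
  have hq0 : (0:ℝ) ≤ ‖z‖ / ρ ^ 2 := by positivity
  have hq1 : ‖z‖ / ρ ^ 2 < 1 := (div_lt_one (by positivity)).2 h2
  exact Summable.of_nonneg_of_le (fun n => norm_nonneg _) (kterm_norm_le hμ h0 h1 hu)
    ((summable_geometric_of_lt_one hq0 hq1).mul_left _)

lemma kterm_summable (hμ : IsRadialWeight μ) {z u : ℂ} (hz : ‖z‖ < 1)
    (hu : ‖u‖ ≤ 1) : Summable fun n : ℕ => kterm μ z u n :=
  (kterm_summable_norm hμ hz hu).of_norm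

lemma kernel_norm_le (hμ : IsRadialWeight μ) {z : ℂ} (hz : ‖z‖ < 1) :
    ∃ C : ℝ, 0 ≤ C ∧ ∀ u : ℂ, ‖u‖ ≤ 1 → ‖bergmanKernel μ z u‖ ≤ C := by
  obtain ⟨h0, h1, h2⟩ := half_lt_params hz
  set ρ := Real.sqrt ((1 + ‖z‖) / 2)
  have htail := hμ.tailPos ρ h0.le h1
  have hq0 : (0:ℝ) ≤ ‖z‖ / ρ ^ 2 := by positivity
  have hq1 : ‖z‖ / ρ ^ 2 < 1 := (div_lt_one (by positivity)).2 h2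
  have hc0 : (0:ℝ) < 1 / (2 * ρ * wTail μ ρ) := div_pos one_pos (by nlinarith)
  have hc1 : (0:ℝ) < (1 - ‖z‖ / ρ ^ 2)⁻¹ := inv_pos.2 (by linarith)
  refine ⟨(1 / (2 * ρ * wTail μ ρ)) * (1 - ‖z‖ / ρ ^ 2)⁻¹,
    (mul_pos hc0 hc1).le, fun u hu => ?_⟩
  calc ‖bergmanKernel μ z u‖ ≤ ∑' n : ℕ, ‖kterm μ z u n‖ :=
        norm_tsum_le_tsum_norm (kterm_summable_norm hμ hz hu)
    _ ≤ ∑' n : ℕ, (1 / (2 * ρ * wTail μ ρ)) * (‖z‖ / ρ ^ 2) ^ n :=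
        Summable.tsum_le_tsum (kterm_norm_le hμ h0 h1 hu) (kterm_summable_norm hμ hz hu)
          ((summable_geometric_of_lt_one hq0 hq1).mul_left _)
    _ = (1 / (2 * ρ * wTail μ ρ)) * (1 - ‖z‖ / ρ ^ 2)⁻¹ := by
        rw [tsum_mul_left, tsum_geometric_of_lt_one hq0 hq1]

lemma kernel_conj (μ : ℂ → ℝ) (z u : ℂ) :
    starRingEnd ℂ (bergmanKernel μ z u) = bergmanKernel μ u z := by
  rw [kernel_eq_tsum, kernel_eq_tsum, show (starRingEnd ℂ) (∑' n, kterm μ z u n)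
    = star (∑' n, kterm μ z u n) from rfl, tsum_star]
  congr 1
  funext n
  rw [kterm, kterm]
  simp only [star_div₀, star_pow, star_mul', Complex.star_def, Complex.conj_conj,
    Complex.conj_ofReal, map_mul, map_ofNat]
  ring_nf

lemma kernel_abs_symm (μ : ℂ → ℝ) (z u : ℂ) :
    ‖bergmanKernel μ z u‖ = ‖bergmanKernel μ u z‖ := by
  rw [← kernel_conj μ z u, Complex.norm_conj]

lemma mem_unitDisc_iff {z : ℂ} : z ∈ unitDisc ↔ ‖z‖ < 1 := Iff.rfl

end Kernel

end Stmt10Aux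
namespace Stmt10Aux

open MeasureTheory Real Set Filter Complex

section Ortho

variable {μ : ℂ → ℝ}

lemma exp_int_pi_diff_zero {k : ℤ} :
    Complex.exp ((k:ℂ) * ((Real.pi : ℂ) * Complex.I))
      - Complex.exp ((-k:ℂ) * ((Real.pi : ℂ) * Complex.I)) = 0 := by
  have h1 : Complex.exp ((k:ℂ) * ((Real.pi : ℂ) * Complex.I)) = (-1 : ℂ) ^ k := by
    rw [Complex.exp_int_mul, Complex.exp_pi_mul_I]
  have h11 : ((-1:ℂ)) ^ k * (-1:ℂ) ^ k = 1 := by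
    rw [← mul_zpow]; norm_num
  have h2 : Complex.exp ((-k:ℂ) * ((Real.pi : ℂ) * Complex.I)) = (-1 : ℂ) ^ k := by
    rw [show ((-k:ℂ)) = ((-k : ℤ) : ℂ) by push_cast; ring, Complex.exp_int_mul,
      Complex.exp_pi_mul_I, zpow_neg, inv_eq_of_mul_eq_one_right h11]
  rw [h1, h2, sub_self]

lemma theta_integral (n m : ℕ) :
    (∫ θ in Ioo (-Real.pi) Real.pi, Complex.exp (((n:ℂ) - (m:ℂ)) * Complex.I * (θ:ℂ)))
      = if n = m then (((2 * Real.pi : ℝ)) : ℂ) else 0 := by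
  have hπ : (0:ℝ) < Real.pi := Real.pi_pos
  rw [← integral_Ioc_eq_integral_Ioo,
    ← intervalIntegral.integral_of_le (by linarith : -Real.pi ≤ Real.pi)]
  by_cases h : n = m
  · subst h
    simp only [sub_self, zero_mul, Complex.exp_zero, if_pos rfl]
    rw [intervalIntegral.integral_const]
    rw [sub_neg_eq_add, Complex.real_smul]
    push_cast
    ring
  · have hnm : ((n:ℂ)) - (m:ℂ) ≠ 0 := sub_ne_zero.2 (by exact_mod_cast h)
    have hc : ((n:ℂ) - (m:ℂ)) * Complex.I ≠ 0 := mul_ne_zero hnm Complex.I_ne_zero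
    rw [if_neg h]
    have := integral_exp_mul_complex (a := -Real.pi) (b := Real.pi) hc
    rw [show (fun θ : ℝ => Complex.exp (((n:ℂ) - (m:ℂ)) * Complex.I * (θ:ℂ)))
      = fun θ : ℝ => Complex.exp ((((n:ℂ) - (m:ℂ)) * Complex.I) * (θ:ℂ)) by rfl, this]
    have hcast : ((n:ℂ)) - (m:ℂ) = (((n:ℤ) - (m:ℤ) : ℤ):ℂ) := by push_cast; ring
    set k : ℤ := (n:ℤ) - (m:ℤ)
    have e1 : (((n:ℂ)) - (m:ℂ)) * Complex.I * (Real.pi : ℂ)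
        = (k:ℂ) * ((Real.pi : ℂ) * Complex.I) := by rw [hcast]; ring
    have e2 : (((n:ℂ)) - (m:ℂ)) * Complex.I * ((-Real.pi : ℝ) : ℂ)
        = (-k:ℂ) * ((Real.pi : ℂ) * Complex.I) := by
      rw [hcast]; push_cast; ring
    rw [e1, e2, exp_int_pi_diff_zero, zero_div]

lemma ortho (hμ : IsRadialWeight μ) (n m : ℕ) :
    ∫ z in unitDisc, z ^ n * (starRingEnd ℂ z) ^ m * ((μ z : ℝ) : ℂ) ∂dA
      = if n = m then (((2 * wMoment μ (2 * (n:ℝ) + 1) : ℝ)) : ℂ) else 0 := by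
  have hπ : (0:ℝ) < Real.pi := Real.pi_pos
  set g : ℂ → ℂ := fun z => z ^ n * (starRingEnd ℂ z) ^ m * ((μ z : ℝ) : ℂ) with hg
  set F1 : ℝ → ℂ := fun r => ((r:ℂ)) ^ (n + m + 1) * ((μ ((r:ℂ)) : ℝ) : ℂ) with hF1
  set F2 : ℝ → ℂ := fun θ => Complex.exp (((n:ℂ) - (m:ℂ)) * Complex.I * (θ:ℂ)) with hF2
  set S : Set (ℝ × ℝ) := Ioo (0:ℝ) 1 ×ˢ Ioo (-Real.pi) Real.pi with hS
  have hSmeas : MeasurableSet S := measurableSet_Ioo.prod measurableSet_Ioo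
  have hSsub : S ⊆ polarCoord.target := prod_mono Ioo_subset_Ioi_self subset_rfl
  -- step A : polar change of variables
  have hA : ∫ z in unitDisc, g z ∂(volume : Measure ℂ)
      = ∫ p in polarCoord.target, p.1 • indicator unitDisc g (Complex.polarCoord.symm p) := by
    rw [← integral_indicator unitDisc_meas,
      ← Complex.integral_comp_polarCoord_symm (indicator unitDisc g)]
  -- step B : rewrite as indicator of S
  have hB : ∫ p in polarCoord.target, p.1 • indicator unitDisc g (Complex.polarCoord.symm p)
      = ∫ p in S, p.1 • g (Complex.polarCoord.symm p) := by
    rw [setIntegral_congr_fun polarCoord.open_target.measurableSet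
      (g := fun p : ℝ × ℝ => indicator S (fun q : ℝ × ℝ => q.1 • g (Complex.polarCoord.symm q)) p)
      ?_]
    · rw [integral_indicator hSmeas, Measure.restrict_restrict hSmeas,
        inter_eq_self_of_subset_left hSsub]
    · intro p hp
      dsimp only
      replace hp : p ∈ Ioi (0:ℝ) ×ˢ Ioo (-Real.pi) Real.pi := hp
      have hr0 : (0:ℝ) < p.1 := hp.1
      by_cases hlt : p.1 < 1
      · have hmem : Complex.polarCoord.symm p ∈ unitDisc := by
          show ‖_‖ < 1
          rw [Complex.norm_polarCoord_symm, _root_.abs_of_pos hr0]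
          exact hlt
        rw [indicator_of_mem hmem, indicator_of_mem (show p ∈ S from ⟨⟨hr0, hlt⟩, hp.2⟩)]
      · have hnmem : Complex.polarCoord.symm p ∉ unitDisc := by
          show ¬ ‖_‖ < 1
          rw [Complex.norm_polarCoord_symm, _root_.abs_of_pos hr0]
          exact hlt
        rw [indicator_of_notMem hnmem,
          indicator_of_notMem (fun hq => hlt hq.1.2), smul_zero]
  -- step C : the integrand splits as a product on S
  have hC : ∫ p in S, p.1 • g (Complex.polarCoord.symm p)
      = ∫ p in S, F1 p.1 * F2 p.2 := by
    refine setIntegral_congr_fun hSmeas fun q hq => ?_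
    have hr0 : (0:ℝ) < q.1 := hq.1.1
    have hsymm : Complex.polarCoord.symm q = (q.1 : ℂ) * Complex.exp ((q.2:ℂ) * Complex.I) := by
      rw [Complex.polarCoord_symm_apply, Complex.exp_mul_I, Complex.ofReal_cos,
        Complex.ofReal_sin]
    have habs : ‖(q.1:ℂ) * Complex.exp ((q.2:ℂ) * Complex.I)‖ = q.1 := by
      rw [← hsymm, Complex.norm_polarCoord_symm, _root_.abs_of_pos hr0]
    have hμq : μ ((q.1:ℂ) * Complex.exp ((q.2:ℂ) * Complex.I)) = μ ((q.1:ℂ)) := by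
      rw [hμ.radial ((q.1:ℂ) * Complex.exp ((q.2:ℂ) * Complex.I)), habs]
    have hconj : starRingEnd ℂ ((q.1:ℂ) * Complex.exp ((q.2:ℂ) * Complex.I))
        = (q.1:ℂ) * Complex.exp (-((q.2:ℂ) * Complex.I)) := by
      rw [map_mul, Complex.conj_ofReal, ← Complex.exp_conj, map_mul, Complex.conj_ofReal,
        Complex.conj_I, mul_neg]
    show q.1 • g (Complex.polarCoord.symm q) = F1 q.1 * F2 q.2
    rw [Complex.real_smul, hg]
    simp only []
    rw [hsymm, hconj, hμq, mul_pow, mul_pow]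
    rw [← Complex.exp_nat_mul, ← Complex.exp_nat_mul]
    rw [show ((n:ℂ)) * ((q.2:ℂ) * Complex.I) = (n:ℂ) * (q.2:ℂ) * Complex.I by ring,
        show ((m:ℂ)) * -((q.2:ℂ) * Complex.I) = -((m:ℂ) * (q.2:ℂ) * Complex.I) by ring]
    rw [hF1, hF2]
    simp only []
    rw [show (((n:ℂ)) - (m:ℂ)) * Complex.I * (q.2:ℂ)
        = (n:ℂ) * (q.2:ℂ) * Complex.I + -((m:ℂ) * (q.2:ℂ) * Complex.I) by ring]
    rw [Complex.exp_add]
    ring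
  -- step D : split the product integral
  have hD : ∫ p in S, F1 p.1 * F2 p.2
      = (∫ r in Ioo (0:ℝ) 1, F1 r) * (∫ θ in Ioo (-Real.pi) Real.pi, F2 θ) := by
    have hmeas : ((volume : Measure (ℝ × ℝ)).restrict S)
        = ((volume : Measure ℝ).restrict (Ioo (0:ℝ) 1)).prod
          ((volume : Measure ℝ).restrict (Ioo (-Real.pi) Real.pi)) := by
      rw [hS, Measure.prod_restrict, ← Measure.volume_eq_prod]
    rw [hmeas]
    exact integral_prod_mul F1 F2
  -- assemble
  have hmain : ∫ z in unitDisc, g z ∂dA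
      = (1 / Real.pi) • ((∫ r in Ioo (0:ℝ) 1, F1 r) * (∫ θ in Ioo (-Real.pi) Real.pi, F2 θ)) := by
    rw [dA_restrict, integral_smul_measure, ENNReal.toReal_ofReal (by positivity), hA, hB, hC, hD]
  rw [hmain, theta_integral]
  by_cases h : n = m
  · subst h
    rw [if_pos rfl, if_pos rfl]
    have hF1val : (∫ r in Ioo (0:ℝ) 1, F1 r) = ((wMoment μ (2 * (n:ℝ) + 1) : ℝ) : ℂ) := by
      have e1 : ∀ r ∈ Ioo (0:ℝ) 1, F1 r = (((r ^ (n + n + 1) * μ ((r:ℂ)) : ℝ)) : ℂ) := by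
        intro r _
        rw [hF1]; push_cast; ring
      rw [setIntegral_congr_fun measurableSet_Ioo e1]
      have e2 : ∫ r in Ioo (0:ℝ) 1, (((r ^ (n + n + 1) * μ ((r:ℂ)) : ℝ)) : ℂ)
          = ((∫ r in Ioo (0:ℝ) 1, r ^ (n + n + 1) * μ ((r:ℂ)) : ℝ) : ℂ) := integral_ofReal
      rw [e2]
      congr 1
      rw [RW.moment_eq hμ, integral_Ioc_eq_integral_Ioo]
      exact (setIntegral_congr_fun measurableSet_Ioo fun r hr => by
        rw [show (2 * (n:ℝ) + 1) = ((n + n + 1 : ℕ) : ℝ) by push_cast; ring,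
          Real.rpow_natCast]).symm
    rw [hF1val, Complex.real_smul]
    rw [← Complex.ofReal_mul, ← Complex.ofReal_mul]
    congr 1
    field_simp
  · rw [if_neg h, if_neg h, mul_zero, smul_zero]

end Ortho

end Stmt10Aux
namespace Stmt10Aux

open MeasureTheory Real Set Filter Complex

section Reproduce

variable {μ : ℂ → ℝ}

lemma aesm_ofReal_mu (hμ : IsRadialWeight μ) :
    AEStronglyMeasurable (fun z => ((μ z : ℝ) : ℂ)) (dA.restrict unitDisc) :=
  Complex.continuous_ofReal.comp_aestronglyMeasurable hμ.integrable.aestronglyMeasurable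

lemma bounded_mul_integrable (hμ : IsRadialWeight μ) {h : ℂ → ℂ}
    (hh : AEStronglyMeasurable h (dA.restrict unitDisc)) {C : ℝ}
    (hC : ∀ z ∈ unitDisc, ‖h z‖ ≤ C) :
    Integrable (fun z => h z * ((μ z : ℝ) : ℂ)) (dA.restrict unitDisc) := by
  refine Integrable.mono' (hμ.integrable.const_mul C) (hh.mul (aesm_ofReal_mu hμ)) ?_
  rw [ae_restrict_iff' unitDisc_meas]
  refine Eventually.of_forall fun z hz => ?_
  rw [norm_mul, Complex.norm_real, Real.norm_eq_abs,
    _root_.abs_of_nonneg (hμ.nonneg z)]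
  exact mul_le_mul_of_nonneg_right (hC z hz) (hμ.nonneg z)

lemma integral_norm_mul_le (hμ : IsRadialWeight μ) {h : ℂ → ℂ}
    (hh : AEStronglyMeasurable h (dA.restrict unitDisc)) {C : ℝ}
    (hC : ∀ z ∈ unitDisc, ‖h z‖ ≤ C) :
    ∫ z in unitDisc, ‖h z * ((μ z : ℝ) : ℂ)‖ ∂dA ≤ C * ∫ z in unitDisc, μ z ∂dA := by
  have hint : Integrable (fun z => C * μ z) (dA.restrict unitDisc) := hμ.integrable.const_mul C
  have hb : ∀ᵐ z ∂(dA.restrict unitDisc), ‖h z * ((μ z : ℝ) : ℂ)‖ ≤ C * μ z := by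
    rw [ae_restrict_iff' unitDisc_meas]
    refine Eventually.of_forall fun z hz => ?_
    rw [norm_mul, Complex.norm_real, Real.norm_eq_abs,
      _root_.abs_of_nonneg (hμ.nonneg z)]
    exact mul_le_mul_of_nonneg_right (hC z hz) (hμ.nonneg z)
  calc ∫ z in unitDisc, ‖h z * ((μ z : ℝ) : ℂ)‖ ∂dA
      ≤ ∫ z in unitDisc, C * μ z ∂dA :=
        integral_mono_ae (bounded_mul_integrable hμ hh hC).norm hint hb
    _ = C * ∫ z in unitDisc, μ z ∂dA := integral_const_mul C _

lemma reproduce_monomial (hμ : IsRadialWeight μ) {u : ℂ} (hu : ‖u‖ < 1) (m : ℕ) :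
    ∫ z in unitDisc, (starRingEnd ℂ z) ^ m * bergmanKernel μ u z * ((μ z : ℝ) : ℂ) ∂dA
      = (starRingEnd ℂ u) ^ m := by
  obtain ⟨h0, h1, h2⟩ := half_lt_params hu
  set ρ := Real.sqrt ((1 + ‖u‖) / 2) with hρ
  set c0 : ℝ := 1 / (2 * ρ * wTail μ ρ) with hc0
  set q : ℝ := ‖u‖ / ρ ^ 2 with hq
  have hq0 : (0:ℝ) ≤ q := by rw [hq]; positivity
  have hq1 : q < 1 := (div_lt_one (by positivity)).2 h2
  have htail := hμ.tailPos ρ h0.le h1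
  have hc0' : 0 ≤ c0 := by rw [hc0]; positivity
  set f : ℕ → ℂ → ℂ := fun k z => ((starRingEnd ℂ z) ^ m * kterm μ u z k) * ((μ z : ℝ) : ℂ)
    with hf
  have heq : ∀ z : ℂ, (starRingEnd ℂ z) ^ m * bergmanKernel μ u z * ((μ z : ℝ) : ℂ)
      = ∑' k : ℕ, f k z := by
    intro z
    rw [kernel_eq_tsum, ← tsum_mul_left, ← tsum_mul_right]
  have hhm : ∀ k : ℕ, AEStronglyMeasurable (fun z => (starRingEnd ℂ z) ^ m * kterm μ u z k)
      (dA.restrict unitDisc) := by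
    intro k
    apply Continuous.aestronglyMeasurable
    apply ((Complex.continuous_conj.pow m).mul ?_)
    unfold kterm
    exact ((continuous_const.mul continuous_id).pow k).div_const _
  have hbound : ∀ k : ℕ, ∀ z ∈ unitDisc, ‖(starRingEnd ℂ z) ^ m * kterm μ u z k‖ ≤ c0 * q ^ k := by
    intro k z hz
    have hz1 : ‖z‖ ≤ 1 := le_of_lt hz
    have h1' : ‖(starRingEnd ℂ z) ^ m‖ ≤ 1 := by
      rw [norm_pow, Complex.norm_conj]
      exact pow_le_one₀ (norm_nonneg z) hz1
    have h2' := kterm_norm_le hμ (z := u) (u := z) h0 h1 hz1 k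
    calc ‖(starRingEnd ℂ z) ^ m * kterm μ u z k‖ = ‖(starRingEnd ℂ z) ^ m‖ * ‖kterm μ u z k‖ :=
          norm_mul _ _
      _ ≤ 1 * (c0 * q ^ k) := by
          refine mul_le_mul h1' h2' (norm_nonneg _) zero_le_one
      _ = c0 * q ^ k := one_mul _
  have hfint : ∀ k : ℕ, Integrable (f k) (dA.restrict unitDisc) := fun k =>
    bounded_mul_integrable hμ (hhm k) (hbound k)
  have hsum : Summable fun k : ℕ => ∫ z in unitDisc, ‖f k z‖ ∂dA := by
    refine Summable.of_nonneg_of_le (fun k => integral_nonneg fun z => norm_nonneg _)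
      (fun k => integral_norm_mul_le hμ (hhm k) (hbound k))
      ?_
    simpa [mul_assoc, mul_comm, mul_left_comm] using
      (((summable_geometric_of_lt_one hq0 hq1).mul_left c0).mul_right
        (∫ z in unitDisc, μ z ∂dA))
  have hswap : ∫ z in unitDisc, (starRingEnd ℂ z) ^ m * bergmanKernel μ u z * ((μ z : ℝ) : ℂ) ∂dA
      = ∑' k : ℕ, ∫ z in unitDisc, f k z ∂dA := by
    rw [integral_congr_ae (Eventually.of_forall heq)]
    exact (integral_tsum_of_summable_integral_norm hfint hsum).symm
  rw [hswap]
  have hterm : ∀ k : ℕ, ∫ z in unitDisc, f k z ∂dA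
      = ((starRingEnd ℂ u) ^ k / ((2 * wMoment μ (2 * (k:ℝ) + 1) : ℝ) : ℂ))
        * (if k = m then (((2 * wMoment μ (2 * (k:ℝ) + 1) : ℝ)) : ℂ) else 0) := by
    intro k
    have he : ∀ z : ℂ, f k z = ((starRingEnd ℂ u) ^ k / ((2 * wMoment μ (2 * (k:ℝ) + 1) : ℝ) : ℂ))
        * (z ^ k * (starRingEnd ℂ z) ^ m * ((μ z : ℝ) : ℂ)) := by
      intro z
      rw [hf]
      simp only [kterm]
      rw [mul_pow]
      push_cast
      ring
    rw [integral_congr_ae (Eventually.of_forall he), integral_const_mul, ortho hμ k m]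
  rw [tsum_congr hterm, tsum_eq_single m ?_]
  · rw [if_pos rfl]
    have hdm : (((2 * wMoment μ (2 * (m:ℝ) + 1) : ℝ)) : ℂ) ≠ 0 := by
      have := RW.moment_pos hμ (by positivity : (0:ℝ) ≤ 2 * (m:ℝ) + 1)
      exact_mod_cast (by positivity : (2 * wMoment μ (2 * (m:ℝ) + 1) : ℝ) ≠ 0)
    rw [div_mul_cancel₀ _ hdm]
  · intro k hk
    rw [if_neg hk, mul_zero]

end Reproduce

end Stmt10Aux
namespace Stmt10Aux

open MeasureTheory Real Set Filter Complex

instance : SFinite dA := by unfold dA; infer_instance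

section Inner

variable {μ ω ν : ℂ → ℝ}

lemma kterm_continuous (μ : ℂ → ℝ) (w : ℂ) (k : ℕ) :
    Continuous (fun z : ℂ => kterm μ w z k) := by
  unfold kterm
  exact ((continuous_const.mul continuous_id).pow k).div_const _

lemma kterm_continuous' (μ : ℂ → ℝ) (w : ℂ) (k : ℕ) :
    Continuous (fun z : ℂ => kterm μ z w k) := by
  unfold kterm
  exact ((Complex.continuous_conj.mul continuous_const).pow k).div_const _

lemma kterm_norm_swap (hμ : IsRadialWeight μ) (z u : ℂ) (k : ℕ) :
    ‖kterm μ z u k‖ = ‖kterm μ u z k‖ := by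
  rw [kterm_norm hμ, kterm_norm hμ, mul_comm]

lemma kernel_aesm (hμ : IsRadialWeight μ) {w : ℂ} (hw : ‖w‖ < 1) :
    AEStronglyMeasurable (fun z => bergmanKernel μ w z) (dA.restrict unitDisc) := by
  refine aestronglyMeasurable_of_tendsto_ae atTop
    (f := fun N : ℕ => fun z => ∑ k ∈ Finset.range N, kterm μ w z k)
    (fun N => Continuous.aestronglyMeasurable ?_) ?_
  · exact continuous_finset_sum _ fun k _ => kterm_continuous μ w k
  · rw [ae_restrict_iff' unitDisc_meas]
    refine Eventually.of_forall fun z hz => ?_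
    exact (kterm_summable hμ hw (le_of_lt hz)).hasSum.tendsto_sum_nat

lemma kernel_aesm_prod (hμ : IsRadialWeight μ) :
    AEStronglyMeasurable (fun p : ℂ × ℂ => bergmanKernel μ p.2 p.1)
      ((dA.restrict unitDisc).prod (dA.restrict unitDisc)) := by
  refine aestronglyMeasurable_of_tendsto_ae atTop
    (f := fun N : ℕ => fun p : ℂ × ℂ => ∑ k ∈ Finset.range N, kterm μ p.2 p.1 k)
    (fun N => Continuous.aestronglyMeasurable ?_) ?_
  · refine continuous_finset_sum _ fun k _ => ?_
    unfold kterm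
    exact (((Complex.continuous_conj.comp continuous_snd).mul continuous_fst).pow k).div_const _
  · have hfull : ∀ᵐ p : ℂ × ℂ ∂((dA.restrict unitDisc).prod (dA.restrict unitDisc)),
        p ∈ unitDisc ×ˢ unitDisc := by
      rw [Measure.prod_restrict]
      exact ae_restrict_mem (unitDisc_meas.prod unitDisc_meas)
    filter_upwards [hfull] with p hp
    exact (kterm_summable hμ hp.2 (le_of_lt hp.1)).hasSum.tendsto_sum_nat

lemma inner_reproduce (hω : IsRadialWeight ω)
    (hων : IsRadialWeight (fun w => ω w * ν w)) {ζ u : ℂ}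
    (hζ : ‖ζ‖ < 1) (hu : ‖u‖ < 1) :
    ∫ z in unitDisc, starRingEnd ℂ (bergmanKernel ω ζ z)
        * bergmanKernel (fun w => ω w * ν w) u z * ((ω z * ν z : ℝ) : ℂ) ∂dA
      = starRingEnd ℂ (bergmanKernel ω ζ u) := by
  set W : ℂ → ℝ := fun w => ω w * ν w with hW
  obtain ⟨h0, h1, h2⟩ := half_lt_params hζ
  set ρ := Real.sqrt ((1 + ‖ζ‖) / 2) with hρ
  set c0 : ℝ := 1 / (2 * ρ * wTail ω ρ) with hc0
  set q : ℝ := ‖ζ‖ / ρ ^ 2 with hq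
  have hq0 : (0:ℝ) ≤ q := by rw [hq]; positivity
  have hq1 : q < 1 := (div_lt_one (by positivity)).2 h2
  have htail := hω.tailPos ρ h0.le h1
  have hc0' : 0 ≤ c0 := by rw [hc0]; positivity
  obtain ⟨Cu, hCu0, hCu⟩ := kernel_norm_le hων hu
  set g : ℕ → ℂ → ℂ := fun k z => (kterm ω z ζ k * bergmanKernel W u z) * ((W z : ℝ) : ℂ)
    with hg
  have heq : ∀ z : ℂ, starRingEnd ℂ (bergmanKernel ω ζ z) * bergmanKernel W u z
      * ((W z : ℝ) : ℂ) = ∑' k : ℕ, g k z := by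
    intro z
    rw [kernel_conj ω ζ z, kernel_eq_tsum (μ := ω), ← tsum_mul_right, ← tsum_mul_right]
  have hhm : ∀ k : ℕ, AEStronglyMeasurable (fun z => kterm ω z ζ k * bergmanKernel W u z)
      (dA.restrict unitDisc) := fun k =>
    (kterm_continuous' ω ζ k).aestronglyMeasurable.mul (kernel_aesm hων hu)
  have hbound : ∀ k : ℕ, ∀ z ∈ unitDisc,
      ‖kterm ω z ζ k * bergmanKernel W u z‖ ≤ c0 * q ^ k * Cu := by
    intro k z hz
    have hz1 : ‖z‖ ≤ 1 := le_of_lt hz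
    have hk1 : ‖kterm ω z ζ k‖ ≤ c0 * q ^ k := by
      rw [kterm_norm_swap hω]
      exact kterm_norm_le hω (z := ζ) (u := z) h0 h1 hz1 k
    calc ‖kterm ω z ζ k * bergmanKernel W u z‖
        = ‖kterm ω z ζ k‖ * ‖bergmanKernel W u z‖ := norm_mul _ _
      _ ≤ (c0 * q ^ k) * Cu :=
          mul_le_mul hk1 (hCu z hz1) (norm_nonneg _) (by positivity)
  have hfint : ∀ k : ℕ, Integrable (g k) (dA.restrict unitDisc) := fun k =>
    bounded_mul_integrable hων (hhm k) (hbound k)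
  have hsum : Summable fun k : ℕ => ∫ z in unitDisc, ‖g k z‖ ∂dA := by
    refine Summable.of_nonneg_of_le (fun k => integral_nonneg fun z => norm_nonneg _)
      (fun k => integral_norm_mul_le hων (hhm k) (hbound k)) ?_
    simpa [mul_assoc, mul_comm, mul_left_comm] using
      ((((summable_geometric_of_lt_one hq0 hq1).mul_left c0).mul_right Cu).mul_right
        (∫ z in unitDisc, W z ∂dA))
  have hswap : ∫ z in unitDisc, starRingEnd ℂ (bergmanKernel ω ζ z) * bergmanKernel W u z
      * ((W z : ℝ) : ℂ) ∂dA = ∑' k : ℕ, ∫ z in unitDisc, g k z ∂dA := by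
    rw [integral_congr_ae (Eventually.of_forall heq)]
    exact (integral_tsum_of_summable_integral_norm hfint hsum).symm
  have hterm : ∀ k : ℕ, ∫ z in unitDisc, g k z ∂dA
      = (ζ ^ k / ((2 * wMoment ω (2 * (k:ℝ) + 1) : ℝ) : ℂ))
        * (starRingEnd ℂ u) ^ k := by
    intro k
    have he : ∀ z : ℂ, g k z = (ζ ^ k / ((2 * wMoment ω (2 * (k:ℝ) + 1) : ℝ) : ℂ))
        * ((starRingEnd ℂ z) ^ k * bergmanKernel W u z * ((W z : ℝ) : ℂ)) := by
      intro z
      rw [hg]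
      simp only [kterm]
      rw [mul_pow]
      push_cast
      ring
    rw [integral_congr_ae (Eventually.of_forall he), integral_const_mul,
      reproduce_monomial hων hu k]
  calc ∫ z in unitDisc, starRingEnd ℂ (bergmanKernel ω ζ z) * bergmanKernel W u z
      * ((W z : ℝ) : ℂ) ∂dA
      = ∑' k : ℕ, (ζ ^ k / ((2 * wMoment ω (2 * (k:ℝ) + 1) : ℝ) : ℂ)) * (starRingEnd ℂ u) ^ k := by
        rw [hswap, tsum_congr hterm]
    _ = bergmanKernel ω u ζ := by
        rw [kernel_eq_tsum]
        refine tsum_congr fun k => ?_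
        rw [kterm, mul_pow]
        push_cast
        ring
    _ = starRingEnd ℂ (bergmanKernel ω ζ u) := (kernel_conj ω ζ u).symm

end Inner

end Stmt10Aux
open Stmt10Aux MeasureTheory Set Filter

/-- P_ω(V_{ω,ν}(f)) = P_ω(f). -/
theorem stmt_10 (ω : ℂ → ℝ) (hω : IsRadialWeight ω) (ν : ℂ → ℝ) (hν : IsRadialNonneg ν)
    (hων : IsRadialWeight (fun z => ω z * ν z)) (f : ℂ → ℂ)
    (hfm : AEStronglyMeasurable f (dA.restrict unitDisc))
    (hfint : IntegrableOn (fun z => ‖f z‖ *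
        (∫ ζ in unitDisc, ‖bergmanKernel (fun w => ω w * ν w) z ζ‖ *
          (ω ζ * ν ζ) ∂dA) * ω z) unitDisc dA)
    (ζ : ℂ) (hζ : ζ ∈ unitDisc) :
    bergmanProj ω (Vop ω ν f) ζ = bergmanProj ω f ζ := by
  classical
  have hζ' : ‖ζ‖ < 1 := hζ
  set μD := dA.restrict unitDisc with hμDdef
  set H : ℂ → ℝ := fun z => ∫ x in unitDisc,
    ‖bergmanKernel (fun w => ω w * ν w) z x‖ * (ω x * ν x) ∂dA with hHdef
  have hfint' : Integrable (fun z => ‖f z‖ * H z * ω z) μD := hfint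
  obtain ⟨Mζ, hMζ0, hMζ⟩ := kernel_norm_le hω hζ'
  set F : ℂ → ℂ → ℂ := fun z u => (f u * ((ω u : ℝ) : ℂ)) *
    (bergmanKernel (fun w => ω w * ν w) u z * starRingEnd ℂ (bergmanKernel ω ζ z)
      * ((ω z * ν z : ℝ) : ℂ)) with hFdef
  -- pointwise identity for the iterated integral
  have hpt : ∀ z : ℂ, Vop ω ν f z * starRingEnd ℂ (bergmanKernel ω ζ z) * ((ω z : ℝ) : ℂ)
      = ∫ u in unitDisc, F z u ∂dA := by
    intro z
    rw [Vop]
    rw [show (((ν z : ℝ) : ℂ) * (∫ x in unitDisc, f x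
          * starRingEnd ℂ (bergmanKernel (fun w => ω w * ν w) z x) * ((ω x : ℝ) : ℂ) ∂dA))
        * starRingEnd ℂ (bergmanKernel ω ζ z) * ((ω z : ℝ) : ℂ)
        = (∫ x in unitDisc, f x * starRingEnd ℂ (bergmanKernel (fun w => ω w * ν w) z x)
            * ((ω x : ℝ) : ℂ) ∂dA)
          * (((ν z : ℝ) : ℂ) * starRingEnd ℂ (bergmanKernel ω ζ z) * ((ω z : ℝ) : ℂ)) by ring]
    rw [← integral_mul_const]
    refine integral_congr_ae (Eventually.of_forall fun u => ?_)
    rw [hFdef]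
    simp only []
    rw [kernel_conj (fun w => ω w * ν w) z u]
    push_cast
    ring
  -- a.e. strong measurability on the product
  have hstar : AEStronglyMeasurable (fun z => starRingEnd ℂ (bergmanKernel ω ζ z)) μD :=
    Complex.continuous_conj.comp_aestronglyMeasurable (kernel_aesm hω hζ')
  have hWm : AEStronglyMeasurable (fun z => ((ω z * ν z : ℝ) : ℂ)) μD :=
    Complex.continuous_ofReal.comp_aestronglyMeasurable hων.integrable.aestronglyMeasurable
  have hprod_aesm : AEStronglyMeasurable (Function.uncurry F) (μD.prod μD) := by
    have hA1 : AEStronglyMeasurable (fun p : ℂ × ℂ => f p.2 * ((ω p.2 : ℝ) : ℂ)) (μD.prod μD) :=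
      (hfm.mul (aesm_ofReal_mu hω)).comp_snd
    have hA2 : AEStronglyMeasurable
        (fun p : ℂ × ℂ => bergmanKernel (fun w => ω w * ν w) p.2 p.1) (μD.prod μD) :=
      kernel_aesm_prod hων
    exact hA1.mul ((hA2.mul hstar.comp_fst).mul hWm.comp_fst)
  -- integrability of sections in z
  have hsect : ∀ u ∈ unitDisc, Integrable (fun z => F z u) μD := by
    intro u hu
    obtain ⟨Cu, hCu0, hCu⟩ := kernel_norm_le hων (show ‖u‖ < 1 from hu)
    have hker_u : AEStronglyMeasurable
        (fun z => bergmanKernel (fun w => ω w * ν w) u z * starRingEnd ℂ (bergmanKernel ω ζ z))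
        μD := (kernel_aesm hων (show ‖u‖ < 1 from hu)).mul hstar
    have hbnd : ∀ z ∈ unitDisc,
        ‖bergmanKernel (fun w => ω w * ν w) u z * starRingEnd ℂ (bergmanKernel ω ζ z)‖
          ≤ Cu * Mζ := by
      intro z hz
      rw [norm_mul]
      have h1 := hCu z (le_of_lt hz)
      have h2 : ‖starRingEnd ℂ (bergmanKernel ω ζ z)‖ ≤ Mζ := by
        rw [RCLike.norm_conj]
        exact hMζ z (le_of_lt hz)
      exact mul_le_mul h1 h2 (norm_nonneg _) hCu0
    have hmain := bounded_mul_integrable hων hker_u hbnd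
    exact (hmain.const_mul (f u * ((ω u : ℝ) : ℂ))).congr
      (Eventually.of_forall fun z => by rw [hFdef]; try ring)
  -- integrability of u ↦ ∫ ‖F z u‖ dz
  have hnorm_int : Integrable (fun u => ∫ z, ‖Function.uncurry F (z, u)‖ ∂μD) μD := by
    have haesm : AEStronglyMeasurable (fun u => ∫ z, ‖Function.uncurry F (z, u)‖ ∂μD) μD := by
      have h1 : AEStronglyMeasurable (fun p : ℂ × ℂ => ‖Function.uncurry F p.swap‖)
          (μD.prod μD) := hprod_aesm.norm.prod_swap
      exact h1.integral_prod_right'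
    refine Integrable.mono' (hfint'.const_mul Mζ) haesm ?_
    rw [hμDdef, ae_restrict_iff' unitDisc_meas]
    refine Eventually.of_forall fun u hu => ?_
    obtain ⟨Cu, hCu0, hCu⟩ := kernel_norm_le hων (show ‖u‖ < 1 from hu)
    have habs_int : Integrable
        (fun z => ‖bergmanKernel (fun w => ω w * ν w) u z‖ * (ω z * ν z)) μD := by
      refine Integrable.mono' (hων.integrable.const_mul Cu) ?_ ?_
      · refine AEStronglyMeasurable.mul ?_ hων.integrable.aestronglyMeasurable
        have := (kernel_aesm hων (show ‖u‖ < 1 from hu)).norm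
        simpa using this
      · rw [hμDdef, ae_restrict_iff' unitDisc_meas]
        refine Eventually.of_forall fun z hz => ?_
        have h1 := hCu z (le_of_lt hz)
        have h2 : 0 ≤ ω z * ν z := hων.nonneg z
        rw [Real.norm_eq_abs, _root_.abs_of_nonneg (mul_nonneg (norm_nonneg _) h2)]
        exact mul_le_mul_of_nonneg_right h1 h2
    have hle : ∫ z, ‖Function.uncurry F (z, u)‖ ∂μD
        ≤ (‖f u‖ * ω u * Mζ) * H u := by
      have hptle : ∀ z ∈ unitDisc, ‖Function.uncurry F (z, u)‖
          ≤ (‖f u‖ * ω u * Mζ) *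
            (‖bergmanKernel (fun w => ω w * ν w) u z‖ * (ω z * ν z)) := by
        intro z hz
        have e1 : ‖Function.uncurry F (z, u)‖
            = ‖f u‖ * ω u * (‖bergmanKernel (fun w => ω w * ν w) u z‖
              * ‖bergmanKernel ω ζ z‖ * (ω z * ν z)) := by
          show ‖F z u‖ = _
          rw [hFdef]
          simp only []
          rw [norm_mul, norm_mul, norm_mul, norm_mul]
          simp only [Complex.norm_real, Real.norm_eq_abs, Complex.norm_conj]
          rw [_root_.abs_of_nonneg (hω.nonneg u), _root_.abs_of_nonneg (hων.nonneg z)]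
          try ring
        rw [e1]
        have h2 := hMζ z (le_of_lt hz)
        have hf0 : 0 ≤ ‖f u‖ * ω u := mul_nonneg (norm_nonneg _) (hω.nonneg u)
        have h3 : ‖bergmanKernel (fun w => ω w * ν w) u z‖
            * ‖bergmanKernel ω ζ z‖ * (ω z * ν z)
            ≤ Mζ * (‖bergmanKernel (fun w => ω w * ν w) u z‖ * (ω z * ν z)) := by
          have hwz := hων.nonneg z
          have h4 := norm_nonneg (bergmanKernel (fun w => ω w * ν w) u z)
          calc ‖bergmanKernel (fun w => ω w * ν w) u z‖
              * ‖bergmanKernel ω ζ z‖ * (ω z * ν z)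
              = (‖bergmanKernel (fun w => ω w * ν w) u z‖ * (ω z * ν z))
                * ‖bergmanKernel ω ζ z‖ := by ring
            _ ≤ (‖bergmanKernel (fun w => ω w * ν w) u z‖ * (ω z * ν z)) * Mζ :=
                mul_le_mul_of_nonneg_left h2 (mul_nonneg h4 hwz)
            _ = Mζ * (‖bergmanKernel (fun w => ω w * ν w) u z‖ * (ω z * ν z)) := by
                ring
        calc ‖f u‖ * ω u * (‖bergmanKernel (fun w => ω w * ν w) u z‖
              * ‖bergmanKernel ω ζ z‖ * (ω z * ν z))
            ≤ ‖f u‖ * ω u * (Mζ *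
              (‖bergmanKernel (fun w => ω w * ν w) u z‖ * (ω z * ν z))) :=
              mul_le_mul_of_nonneg_left h3 hf0
          _ = (‖f u‖ * ω u * Mζ) *
              (‖bergmanKernel (fun w => ω w * ν w) u z‖ * (ω z * ν z)) := by ring
      calc ∫ z, ‖Function.uncurry F (z, u)‖ ∂μD
          ≤ ∫ z, (‖f u‖ * ω u * Mζ) *
              (‖bergmanKernel (fun w => ω w * ν w) u z‖ * (ω z * ν z)) ∂μD := by
            refine integral_mono_ae ((hsect u hu).norm) (habs_int.const_mul _) ?_
            exact (ae_restrict_iff' unitDisc_meas).mpr (Eventually.of_forall hptle)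
        _ = (‖f u‖ * ω u * Mζ) * H u := by
            rw [integral_const_mul]
      done
    have hnn : 0 ≤ ∫ z, ‖Function.uncurry F (z, u)‖ ∂μD :=
      integral_nonneg fun z => norm_nonneg _
    rw [Real.norm_eq_abs, _root_.abs_of_nonneg hnn]
    calc ∫ z, ‖Function.uncurry F (z, u)‖ ∂μD ≤ (‖f u‖ * ω u * Mζ) * H u := hle
      _ = Mζ * (‖f u‖ * H u * ω u) := by ring
  -- product integrability and Fubini
  have hFint : Integrable (Function.uncurry F) (μD.prod μD) := by
    refine (integrable_prod_iff' hprod_aesm).2 ⟨?_, hnorm_int⟩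
    filter_upwards [ae_restrict_mem unitDisc_meas] with u hu
    exact hsect u hu
  have hswap := integral_integral_swap hFint
  -- conclude
  calc bergmanProj ω (Vop ω ν f) ζ
      = ∫ z in unitDisc, ∫ u in unitDisc, F z u ∂dA ∂dA :=
        integral_congr_ae (Eventually.of_forall hpt)
    _ = ∫ u in unitDisc, ∫ z in unitDisc, F z u ∂dA ∂dA := hswap
    _ = bergmanProj ω f ζ := by
        refine integral_congr_ae ?_
        filter_upwards [ae_restrict_mem unitDisc_meas] with u hu
        have hinner : ∫ z in unitDisc, bergmanKernel (fun w => ω w * ν w) u z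
            * starRingEnd ℂ (bergmanKernel ω ζ z) * ((ω z * ν z : ℝ) : ℂ) ∂dA
            = starRingEnd ℂ (bergmanKernel ω ζ u) := by
          rw [← inner_reproduce hω hων hζ' (show ‖u‖ < 1 from hu)]
          refine integral_congr_ae (Eventually.of_forall fun z => ?_)
          ring
        calc ∫ z in unitDisc, F z u ∂dA
            = (f u * ((ω u : ℝ) : ℂ)) * ∫ z in unitDisc,
                bergmanKernel (fun w => ω w * ν w) u z * starRingEnd ℂ (bergmanKernel ω ζ z)
                  * ((ω z * ν z : ℝ) : ℂ) ∂dA := integral_const_mul _ _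
          _ = f u * starRingEnd ℂ (bergmanKernel ω ζ u) * ((ω u : ℝ) : ℂ) := by
              rw [hinner]; ring
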